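/- Let E and F be Banach lattices and T : E → F a disjointness preserving linear operator (not assumed continuous). Then for every sequence (u_n) of pairwise disjoint elements of E there exists a constant C such that ‖T(u_n)‖ ≤ C‖u_n‖ for all n. -/

import Mathlib

section LatticeLemmas

variable {α : Type*} [Lattice α] [AddCommGroup α] [CovariantClass α α (· + ·) (· ≤ ·)]

/-- Riesz decomposition-type inequality. -/
lemma aux_inf_add_le {a b c : α} (ha : 0 ≤ a) (hb : 0 ≤ b) (hc : 0 ≤ c) :
    (a + b) ⊓ c ≤ a ⊓ c + b ⊓ c := by
  have h : a ⊓ c + b ⊓ c = ((a + b) ⊓ (c + b)) ⊓ ((a + c) ⊓ (c + c)) := by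
    rw [add_inf, inf_add, inf_add]
  rw [h]
  refine le_inf (le_inf inf_le_left (inf_le_right.trans (le_add_of_nonneg_right hb)))
    (le_inf (inf_le_right.trans (le_add_of_nonneg_left ha))
      (inf_le_right.trans (le_add_of_nonneg_left hc)))

lemma aux_nsmul_inf_eq_zero {a c : α} (ha : 0 ≤ a) (hc : 0 ≤ c) (h : a ⊓ c = 0) (n : ℕ) :
    (n • a) ⊓ c = 0 := by
  induction n with
  | zero => simpa using inf_eq_left.mpr hc
  | succ n ih =>
      refine le_antisymm ?_ (le_inf (nsmul_nonneg ha _) hc)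
      calc ((n + 1) • a) ⊓ c = (n • a + a) ⊓ c := by rw [succ_nsmul]
        _ ≤ (n • a) ⊓ c + a ⊓ c := aux_inf_add_le (nsmul_nonneg ha n) ha hc
        _ = 0 := by rw [ih, h, add_zero]

lemma aux_nsmul_inf_nsmul_eq_zero {a b : α} (ha : 0 ≤ a) (hb : 0 ≤ b) (h : a ⊓ b = 0)
    (p q : ℕ) : (p • a) ⊓ (q • b) = 0 := by
  have h1 : (p • a) ⊓ b = 0 := aux_nsmul_inf_eq_zero ha hb h p
  have h2 : b ⊓ (p • a) = 0 := by rwa [inf_comm]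
  have := aux_nsmul_inf_eq_zero hb (nsmul_nonneg ha p) h2 q
  rwa [inf_comm]

/-- Positivity: `0 ≤ n • a` implies `0 ≤ a` for `n ≥ 1`. -/
lemma aux_nonneg_of_nsmul_nonneg {a : α} {n : ℕ} (hn : 1 ≤ n) (h : 0 ≤ n • a) : 0 ≤ a := by
  have hdec : n • a = n • a⁺ - n • a⁻ := by
    rw [← smul_sub, posPart_sub_negPart]
  have hd : (n • a⁺) ⊓ (n • a⁻) = 0 :=
    aux_nsmul_inf_nsmul_eq_zero (posPart_nonneg a) (negPart_nonneg a)
      (posPart_inf_negPart_eq_zero a) n n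
  have hle : n • a⁻ ≤ n • a⁺ := by
    have := h
    rw [hdec, sub_nonneg] at this
    exact this
  have hz : n • a⁻ = 0 := by
    have : (n • a⁻) ⊓ (n • a⁺) = n • a⁻ := inf_eq_left.mpr hle
    rw [inf_comm] at this
    rw [← this, hd]
  have h1 : a⁻ ≤ n • a⁻ := by
    calc a⁻ = 1 • a⁻ := (one_smul ℕ _).symm
      _ ≤ n • a⁻ := nsmul_le_nsmul_left (negPart_nonneg a) hn
  have : a⁻ = 0 := le_antisymm (h1.trans hz.le) (negPart_nonneg a)
  exact negPart_eq_zero.mp this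

/-- If `x` and `y` are disjoint then `|x| ≤ |x + y|`. -/
lemma aux_abs_le_abs_add {x y : α} (h : |x| ⊓ |y| = 0) : |x| ≤ |x + y| := by
  have h3 : |x| ⊔ |y| = |(|y| - |x|)| := by
    rw [← sup_sub_inf_eq_abs_sub, h, sub_zero]
  have h4 : |(|y| - |x|)| ≤ |x + y| := by
    have := abs_abs_sub_abs_le y (-x)
    rwa [abs_neg, sub_neg_eq_add, add_comm y x] at this
  exact le_sup_left.trans (h3 ▸ h4)

lemma aux_sum_nonneg {ι : Type*} (s : Finset ι) (a : ι → α) (ha : ∀ j ∈ s, 0 ≤ a j) :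
    (0 : α) ≤ ∑ j ∈ s, a j := by
  classical
  induction s using Finset.induction_on with
  | empty => simp
  | insert i s hnotmem ih =>
      rw [Finset.sum_insert hnotmem]
      exact add_nonneg (ha i (Finset.mem_insert_self i s))
        (ih fun j hj => ha j (Finset.mem_insert_of_mem hj))

lemma aux_sum_inf_le {ι : Type*} (s : Finset ι) (a : ι → α) {c : α}
    (ha : ∀ j ∈ s, 0 ≤ a j) (hc : 0 ≤ c) :
    (∑ j ∈ s, a j) ⊓ c ≤ ∑ j ∈ s, (a j ⊓ c) := by
  classical
  induction s using Finset.induction_on with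
  | empty => simpa using inf_eq_left.mpr hc
  | insert i s hnotmem ih =>
      rw [Finset.sum_insert hnotmem, Finset.sum_insert hnotmem]
      have h0 : (0 : α) ≤ ∑ j ∈ s, a j :=
        aux_sum_nonneg s a fun j hj => ha j (Finset.mem_insert_of_mem hj)
      have h1 := aux_inf_add_le (ha i (Finset.mem_insert_self i s)) h0 hc
      exact h1.trans (add_le_add le_rfl (ih fun j hj => ha j (Finset.mem_insert_of_mem hj)))

lemma aux_abs_sum_le {ι : Type*} (s : Finset ι) (f : ι → α) :
    |∑ j ∈ s, f j| ≤ ∑ j ∈ s, |f j| := by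
  classical
  induction s using Finset.induction_on with
  | empty => simp
  | insert i s hnotmem ih =>
      rw [Finset.sum_insert hnotmem, Finset.sum_insert hnotmem]
      exact (abs_add_le _ _).trans (add_le_add le_rfl ih)

/-- A finite sum of elements disjoint from `c` is disjoint from `c`. -/
lemma aux_abs_sum_inf_eq_zero {ι : Type*} (s : Finset ι) (f : ι → α) {c : α} (hc : 0 ≤ c)
    (h : ∀ j ∈ s, |f j| ⊓ c = 0) : |∑ j ∈ s, f j| ⊓ c = 0 := by
  refine le_antisymm ?_ (le_inf (abs_nonneg _) hc)
  calc |∑ j ∈ s, f j| ⊓ c ≤ (∑ j ∈ s, |f j|) ⊓ c :=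
        inf_le_inf_right c (aux_abs_sum_le s f)
    _ ≤ ∑ j ∈ s, (|f j| ⊓ c) := aux_sum_inf_le s _ (fun j _ => abs_nonneg _) hc
    _ = 0 := Finset.sum_eq_zero h

end LatticeLemmas

section SmulLemmas

variable {E : Type*} [NormedAddCommGroup E] [Lattice E] [HasSolidNorm E] [IsOrderedAddMonoid E] [NormedSpace ℝ E]

lemma aux_smul_nonneg {c : ℝ} (hc : 0 ≤ c) {x : E} (hx : 0 ≤ x) : 0 ≤ c • x := by
  have hclosed : IsClosed {t : ℝ | 0 ≤ t • x} :=
    isClosed_nonneg.preimage (continuous_id.smul continuous_const)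
  -- rational nonneg scalars work by the nsmul positivity lemma
  have hq : ∀ q : ℚ, 0 ≤ q → 0 ≤ (q : ℝ) • x := by
    intro q hq0
    have hkey : (q.den : ℕ) • ((q : ℝ) • x) = (q.num.toNat : ℕ) • x := by
      rw [← Nat.cast_smul_eq_nsmul ℝ, ← Nat.cast_smul_eq_nsmul ℝ, smul_smul]
      congr 1
      have h1 : ((q.den : ℝ)) * (q : ℝ) = (q.num : ℝ) := by
        rw [Rat.cast_def]; field_simp
      rw [h1]
      congr 1
      exact (Int.toNat_of_nonneg (Rat.num_nonneg.mpr hq0)).symm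
    refine aux_nonneg_of_nsmul_nonneg (n := q.den) q.pos ?_
    rw [hkey]
    exact nsmul_nonneg hx _
  -- approximate c from above by rationals
  have hex : ∀ n : ℕ, ∃ q : ℚ, c < (q : ℝ) ∧ (q : ℝ) < c + 1 / (n + 1) := by
    intro n
    exact exists_rat_btwn (lt_add_of_pos_right c (by positivity))
  choose q hq1 hq2 using hex
  have hten : Filter.Tendsto (fun n : ℕ => ((q n : ℝ))) Filter.atTop (nhds c) := by
    have hupper : Filter.Tendsto (fun n : ℕ => c + 1 / ((n : ℝ) + 1)) Filter.atTop (nhds c) := by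
      have := tendsto_one_div_add_atTop_nhds_zero_nat (𝕜 := ℝ)
      simpa using (tendsto_const_nhds (x := c)).add this
    exact tendsto_of_tendsto_of_tendsto_of_le_of_le tendsto_const_nhds hupper
      (fun n => (hq1 n).le) (fun n => (hq2 n).le)
  have hmem : ∀ n : ℕ, ((q n : ℝ)) ∈ {t : ℝ | 0 ≤ t • x} := by
    intro n
    exact hq (q n) (by exact_mod_cast (hc.trans (hq1 n).le))
  have := hclosed.mem_of_tendsto hten (Filter.Eventually.of_forall hmem)
  exact this

lemma aux_smul_le_smul {c : ℝ} (hc : 0 ≤ c) {x y : E} (h : x ≤ y) : c • x ≤ c • y := by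
  have := aux_smul_nonneg hc (sub_nonneg.mpr h)
  rwa [smul_sub, sub_nonneg] at this

lemma aux_abs_smul_le {c : ℝ} (hc : 0 ≤ c) (x : E) : |c • x| ≤ c • |x| := by
  refine sup_le ?_ ?_
  · exact aux_smul_le_smul hc (le_abs_self x)
  · rw [← smul_neg]
    exact aux_smul_le_smul hc (neg_le_abs x)

lemma aux_smul_disjoint {c d : ℝ} (hc : 0 ≤ c) (hd : 0 ≤ d) {a b : E}
    (ha : 0 ≤ a) (hb : 0 ≤ b) (h : a ⊓ b = 0) : (c • a) ⊓ (d • b) = 0 := by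
  obtain ⟨n, hn⟩ := exists_nat_ge (max c d)
  have hcn : c ≤ (n : ℝ) := (le_max_left c d).trans hn
  have hdn : d ≤ (n : ℝ) := (le_max_right c d).trans hn
  have h1 : c • a ≤ n • a := by
    rw [← Nat.cast_smul_eq_nsmul ℝ]
    have := aux_smul_nonneg (sub_nonneg.mpr hcn) ha
    rwa [sub_smul, sub_nonneg] at this
  have h2 : d • b ≤ n • b := by
    rw [← Nat.cast_smul_eq_nsmul ℝ]
    have := aux_smul_nonneg (sub_nonneg.mpr hdn) hb
    rwa [sub_smul, sub_nonneg] at this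
  refine le_antisymm ?_ (le_inf (aux_smul_nonneg hc ha) (aux_smul_nonneg hd hb))
  calc (c • a) ⊓ (d • b) ≤ (n • a) ⊓ (n • b) := inf_le_inf h1 h2
    _ = 0 := aux_nsmul_inf_nsmul_eq_zero ha hb h n n

end SmulLemmas

variable {E F : Type*}
  [NormedAddCommGroup E] [Lattice E] [HasSolidNorm E] [IsOrderedAddMonoid E] [NormedSpace ℝ E] [CompleteSpace E]
  [NormedAddCommGroup F] [Lattice F] [HasSolidNorm F] [IsOrderedAddMonoid F] [NormedSpace ℝ F] [CompleteSpace F]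

/-- Main boundedness theorem: a disjointness preserving operator is uniformly bounded
on every pairwise disjoint sequence. -/
theorem main_boundedness (T : E →ₗ[ℝ] F)
    (hdp : ∀ x y : E, |x| ⊓ |y| = 0 → |T x| ⊓ |T y| = 0)
    (u : ℕ → E) (hdisj : Pairwise fun m n => |u m| ⊓ |u n| = 0) :
    ∃ C : ℝ, ∀ n : ℕ, ‖T (u n)‖ ≤ C * ‖u n‖ := by
  by_contra hC
  push_neg at hC
  -- ratio function
  set R : ℕ → ℝ := fun m => ‖T (u m)‖ / ‖u m‖ with hRdef
  -- selection of indices with big ratio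
  have sel : ∀ C : ℝ, ∃ n, u n ≠ 0 ∧ max C 0 < R n := by
    intro C
    obtain ⟨n, hn⟩ := hC (max C 0)
    have hun : u n ≠ 0 := by
      intro h0
      rw [h0] at hn
      simp at hn
    have hpos : 0 < ‖u n‖ := norm_pos_iff.mpr hun
    exact ⟨n, hun, (lt_div_iff₀ hpos).mpr hn⟩
  choose Fc hF1 hF2 using sel
  -- the running max of ratios
  have hBne : ∀ m : ℕ, (Finset.range (m + 1)).Nonempty :=
    fun m => Finset.nonempty_range_iff.mpr (Nat.succ_ne_zero m)
  set B : ℕ → ℝ := fun m => (Finset.range (m + 1)).sup' (hBne m) R with hBdef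
  -- recursive index sequence
  set f : ℕ → ℕ := fun k =>
    Nat.rec (Fc 0) (fun k nk => Fc (max (B nk) (2 ^ (k + 2) * (k + 1)))) k with hfdef
  have hf0 : f 0 = Fc 0 := rfl
  have hfs : ∀ k, f (k + 1) = Fc (max (B (f k)) (2 ^ (k + 2) * (k + 1))) := fun k => rfl
  have hune : ∀ k, u (f k) ≠ 0 := by
    intro k
    cases k with
    | zero => exact hF1 0
    | succ k => rw [hfs k]; exact hF1 _
  have hRk : ∀ k : ℕ, (2 : ℝ) ^ (k + 1) * k < R (f k) := by
    intro k
    cases k with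
    | zero =>
        have := hF2 0
        simpa [hf0] using this
    | succ k =>
        have h := hF2 (max (B (f k)) (2 ^ (k + 2) * (k + 1)))
        rw [← hfs k] at h
        refine lt_of_le_of_lt ?_ h
        have he : (2 : ℝ) ^ (k + 1 + 1) * ((k + 1 : ℕ) : ℝ) = 2 ^ (k + 2) * ((k : ℝ) + 1) := by
          push_cast; ring
        rw [he]
        exact le_max_of_le_left (le_max_right _ _)
  have hmono : StrictMono f := by
    apply strictMono_nat_of_lt_succ
    intro k
    by_contra hle
    push_neg at hle
    have h1 : R (f (k + 1)) ≤ B (f k) :=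
      Finset.le_sup' R (Finset.mem_range.mpr (Nat.lt_succ_of_le hle))
    have h2 := hF2 (max (B (f k)) (2 ^ (k + 2) * (k + 1)))
    rw [← hfs k] at h2
    have h3 : B (f k) ≤ max (max (B (f k)) (2 ^ (k + 2) * ((k : ℝ) + 1))) 0 :=
      le_max_of_le_left (le_max_left _ _)
    linarith
  have hupos : ∀ k, 0 < ‖u (f k)‖ := fun k => norm_pos_iff.mpr (hune k)
  set c : ℕ → ℝ := fun k => ((2 : ℝ) ^ (k + 1) * ‖u (f k)‖)⁻¹ with hcdef
  have hcpos : ∀ k, 0 < c k := fun k =>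
    inv_pos.mpr (mul_pos (by positivity) (hupos k))
  set w : ℕ → E := fun k => c k • u (f k) with hwdef
  have hwnorm : ∀ k, ‖w k‖ = ((2 : ℝ) ^ (k + 1))⁻¹ := by
    intro k
    rw [hwdef]
    simp only []
    rw [norm_smul, Real.norm_eq_abs, abs_of_pos (hcpos k), hcdef]
    simp only []
    rw [mul_inv, mul_assoc, inv_mul_cancel₀ (hupos k).ne']
    rw [mul_one]
  have hTw : ∀ k : ℕ, (k : ℝ) < ‖T (w k)‖ := by
    intro k
    have h1 : ‖T (w k)‖ = ((2 : ℝ) ^ (k + 1) * ‖u (f k)‖)⁻¹ * ‖T (u (f k))‖ := by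
      rw [hwdef]
      simp only []
      rw [map_smul, norm_smul, Real.norm_eq_abs, abs_of_pos (hcpos k), hcdef]
    have hR' : (2 : ℝ) ^ (k + 1) * k * ‖u (f k)‖ < ‖T (u (f k))‖ := by
      have h2 := hRk k
      rw [hRdef] at h2
      exact (lt_div_iff₀ (hupos k)).mp h2
    rw [h1, inv_mul_eq_div, lt_div_iff₀ (mul_pos (by positivity) (hupos k))]
    calc (k : ℝ) * (2 ^ (k + 1) * ‖u (f k)‖) = 2 ^ (k + 1) * k * ‖u (f k)‖ := by ring
      _ < ‖T (u (f k))‖ := hR'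
  have hsum : Summable w := by
    apply Summable.of_norm
    have hfun : (fun k => ‖w k‖) = fun k => ((2 : ℝ) ^ (k + 1))⁻¹ := funext hwnorm
    rw [hfun]
    apply Summable.congr (summable_geometric_two.mul_left (1 / 2))
    intro k
    rw [pow_succ]
    field_simp
    rw [← mul_pow]; norm_num
  set v := ∑' k, w k with hvdef
  have hv : HasSum w v := hsum.hasSum
  have hwpair : ∀ k j, k ≠ j → |w k| ⊓ |w j| = 0 := by
    intro k j hkj
    have hdisj' : |u (f k)| ⊓ |u (f j)| = 0 := hdisj (hmono.injective.ne hkj)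
    refine le_antisymm ?_ (le_inf (abs_nonneg _) (abs_nonneg _))
    calc |w k| ⊓ |w j| ≤ (c k • |u (f k)|) ⊓ (c j • |u (f j)|) :=
          inf_le_inf (aux_abs_smul_le (hcpos k).le _) (aux_abs_smul_le (hcpos j).le _)
      _ = 0 := aux_smul_disjoint (hcpos k).le (hcpos j).le (abs_nonneg _) (abs_nonneg _) hdisj'
  have htail : ∀ k, |w k| ⊓ |v - w k| = 0 := by
    intro k
    have hcont : Continuous fun y : E => |w k| ⊓ |y - w k| := by
      apply continuous_const.inf
      have habseq : (fun y : E => |y - w k|) = fun y : E => (y - w k) ⊔ -(y - w k) := rfl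
      rw [habseq]
      exact (continuous_id.sub continuous_const).sup (continuous_id.sub continuous_const).neg
    have h1 : Filter.Tendsto (fun s : Finset ℕ => |w k| ⊓ |(∑ j ∈ s, w j) - w k|)
        Filter.atTop (nhds (|w k| ⊓ |v - w k|)) := (hcont.tendsto v).comp hv
    have h2 : ∀ᶠ s : Finset ℕ in Filter.atTop, |w k| ⊓ |(∑ j ∈ s, w j) - w k| = 0 := by
      refine Filter.eventually_atTop.mpr ⟨{k}, fun s hs => ?_⟩
      have hk : k ∈ s := Finset.singleton_subset_iff.mp hs
      rw [← Finset.sum_erase_eq_sub hk, inf_comm]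
      refine aux_abs_sum_inf_eq_zero _ _ (abs_nonneg _) fun j hj => ?_
      exact hwpair j k (Finset.ne_of_mem_erase hj)
    exact tendsto_nhds_unique h1
      (Filter.Tendsto.congr' (h2.mono fun s hs => hs.symm) tendsto_const_nhds)
  have hbound : ∀ k, ‖T (w k)‖ ≤ ‖T v‖ := by
    intro k
    have hd := hdp (w k) (v - w k) (htail k)
    have hsplit : T v = T (w k) + T (v - w k) := by
      rw [← map_add]
      congr 1
      abel
    have habs : |T (w k)| ≤ |T v| := by
      rw [hsplit]
      exact aux_abs_le_abs_add hd
    exact HasSolidNorm.solid habs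
  obtain ⟨k, hk⟩ := exists_nat_gt ‖T v‖
  have := (hTw k).trans_le (hbound k)
  linarith
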